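/- Let Ω = (-a,a) and let h ∈ H¹(Ω) be a nonnegative function with ∫_Ω h(x) dx = M > 0. Then ∫_Ω h(x)² dx ≤ 6^{2/3} M^{4/3} (∫_Ω h_x(x)² dx)^{1/3} + M²/|Ω|. -/

import Mathlib

open MeasureTheory intervalIntegral

lemma hasDerivAt_mul_sqrt (t : ℝ) :
    HasDerivAt (fun s : ℝ => s * Real.sqrt s) (3/2 * Real.sqrt t) t := by
  rcases lt_trichotomy t 0 with ht | rfl | ht
  · have hev : (fun s : ℝ => s * Real.sqrt s) =ᶠ[nhds t] fun _ => (0:ℝ) := by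
      filter_upwards [eventually_lt_nhds ht] with s hs
      rw [Real.sqrt_eq_zero_of_nonpos hs.le, mul_zero]
    have h0 : HasDerivAt (fun _ : ℝ => (0:ℝ)) 0 t := hasDerivAt_const t 0
    have := h0.congr_of_eventuallyEq hev
    simpa [Real.sqrt_eq_zero_of_nonpos ht.le] using this
  · rw [hasDerivAt_iff_tendsto_slope]
    have hcong : (slope (fun s : ℝ => s * Real.sqrt s) 0) =ᶠ[nhdsWithin 0 {(0:ℝ)}ᶜ] Real.sqrt := by
      filter_upwards [self_mem_nhdsWithin] with s hs
      have hs0 : s ≠ 0 := hs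
      simp [slope, hs0]
    rw [Filter.tendsto_congr' hcong]
    simpa using (Real.continuous_sqrt.continuousAt (x := (0:ℝ))).continuousWithinAt.tendsto
  · have h1 : HasDerivAt (fun s : ℝ => s * Real.sqrt s)
        (1 * Real.sqrt t + t * (1 / (2 * Real.sqrt t))) t :=
      (hasDerivAt_id t).mul (Real.hasDerivAt_sqrt (ne_of_gt ht))
    convert h1 using 1
    have hst : Real.sqrt t ≠ 0 := by positivity
    have h2 : Real.sqrt t * Real.sqrt t = t := Real.mul_self_sqrt ht.le
    field_simp
    nlinarith [h2]

lemma mul_sqrt_eq_rpow {t : ℝ} (ht : 0 ≤ t) : t * Real.sqrt t = t ^ ((3:ℝ)/2) := by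
  rcases eq_or_lt_of_le ht with rfl | h
  · simp [Real.zero_rpow]
  · rw [Real.sqrt_eq_rpow]
    have : t ^ ((3:ℝ)/2) = t ^ ((1:ℝ) + 1/2) := by norm_num
    rw [this, Real.rpow_add h, Real.rpow_one]

lemma real_rpow_add_le {A B p : ℝ} (hA : 0 ≤ A) (hB : 0 ≤ B) (hp : 0 ≤ p) (hp1 : p ≤ 1) :
    (A + B) ^ p ≤ A ^ p + B ^ p := by
  lift A to NNReal using hA
  lift B to NNReal using hB
  exact_mod_cast NNReal.rpow_add_le_add_rpow A B hp hp1

/-- Nash-type inequality: for a nonnegative `h ∈ H¹(-a,a)` with mass `M > 0`,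
`∫ h² ≤ 6^(2/3) M^(4/3) (∫ h_x²)^(1/3) + M²/|Ω|`. -/
theorem stmt0 (a M : ℝ) (ha : 0 < a) (h : ℝ → ℝ)
    (hdiff : ∀ x ∈ Set.Icc (-a) a, DifferentiableAt ℝ h x)
    (hL2 : IntegrableOn (fun x => (h x) ^ 2) (Set.Icc (-a) a))
    (hL2' : IntegrableOn (fun x => (deriv h x) ^ 2) (Set.Icc (-a) a))
    (hnn : ∀ x ∈ Set.Icc (-a) a, 0 ≤ h x)
    (hM : (∫ x in (-a)..a, h x) = M) (hMpos : 0 < M) :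
    (∫ x in (-a)..a, (h x) ^ 2)
      ≤ (6 : ℝ) ^ ((2 : ℝ)/3) * M ^ ((4 : ℝ)/3) *
          (∫ x in (-a)..a, (deriv h x) ^ 2) ^ ((1 : ℝ)/3)
        + M ^ 2 / (2 * a) := by
  have haa : -a ≤ a := by linarith
  have h2a : (0:ℝ) < 2 * a := by linarith
  set D := ∫ x in (-a)..a, (deriv h x) ^ 2 with hDdef
  have hD0 : 0 ≤ D := intervalIntegral.integral_nonneg haa (fun x _ => sq_nonneg _)
  have hIcc : Set.uIcc (-a) a = Set.Icc (-a) a := Set.uIcc_of_le haa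
  have hcont : ContinuousOn h (Set.Icc (-a) a) := fun x hx =>
    (hdiff x hx).continuousAt.continuousWithinAt
  have hIntIcc : IntegrableOn h (Set.Icc (-a) a) := hcont.integrableOn_compact isCompact_Icc
  have hInt : IntervalIntegrable h volume (-a) a := (hIcc ▸ hIntIcc).intervalIntegrable
  have hL2Int : IntervalIntegrable (fun x => (h x) ^ 2) volume (-a) a :=
    (hIcc ▸ hL2).intervalIntegrable
  have hL2'Int : IntervalIntegrable (fun x => (deriv h x) ^ 2) volume (-a) a :=
    (hIcc ▸ hL2').intervalIntegrable
  -- minimum point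
  obtain ⟨x0, hx0, hmin⟩ := isCompact_Icc.exists_isMinOn (Set.nonempty_Icc.2 haa) hcont
  have hx00 : 0 ≤ h x0 := hnn x0 hx0
  have hx0le : h x0 ≤ M / (2*a) := by
    have hmono : (∫ _x in (-a)..a, h x0) ≤ ∫ x in (-a)..a, h x :=
      intervalIntegral.integral_mono_on haa intervalIntegrable_const hInt
        (fun x hx => isMinOn_iff.mp hmin x hx)
    rw [intervalIntegral.integral_const, hM, smul_eq_mul] at hmono
    rw [le_div_iff₀ h2a]
    nlinarith [hmono]
  -- the derivative integrand
  set g : ℝ → ℝ := fun t => 3/2 * Real.sqrt (h t) * deriv h t with hgdef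
  have hgIcc : IntegrableOn g (Set.Icc (-a) a) := by
    have hmeas : AEStronglyMeasurable g (volume.restrict (Set.Icc (-a) a)) := by
      apply AEStronglyMeasurable.mul
      · exact ((Real.continuous_sqrt.comp_continuousOn hcont).aestronglyMeasurable
          measurableSet_Icc).const_mul _
      · exact (measurable_deriv h).aestronglyMeasurable
    have hbnd : IntegrableOn (fun t => 3/4 * (h t + (deriv h t)^2)) (Set.Icc (-a) a) := by
      have := (hIntIcc.add hL2').const_mul (3/4 : ℝ)
      exact this
    refine Integrable.mono' hbnd hmeas ?_
    refine (ae_restrict_iff' measurableSet_Icc).2 (ae_of_all _ fun t ht => ?_)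
    have hs := Real.sq_sqrt (hnn t ht)
    have hsn := Real.sqrt_nonneg (h t)
    have hd := sq_abs (deriv h t)
    have h1 : ‖g t‖ = 3/2 * (Real.sqrt (h t) * |deriv h t|) := by
      simp only [hgdef, Real.norm_eq_abs, abs_mul]
      rw [abs_of_nonneg hsn, abs_of_pos (by norm_num : (0:ℝ) < 3/2)]
      ring
    rw [h1]
    nlinarith [sq_nonneg (Real.sqrt (h t) - |deriv h t|), abs_nonneg (deriv h t), hs, hd]
  have hgI : IntervalIntegrable g volume (-a) a := (hIcc ▸ hgIcc).intervalIntegrable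
  have hgabsI : IntervalIntegrable (fun t => |g t|) volume (-a) a := hgI.abs
  -- FTC key estimate
  have hKey : ∀ x ∈ Set.Icc (-a) a,
      h x * Real.sqrt (h x) ≤ h x0 * Real.sqrt (h x0) + ∫ t in (-a)..a, |g t| := by
    intro x hx
    have hsub : Set.uIcc x0 x ⊆ Set.Icc (-a) a := by
      rw [← hIcc]; exact Set.uIcc_subset_uIcc (hIcc ▸ hx0) (hIcc ▸ hx)
    have hftc : ∫ t in x0..x, g t = h x * Real.sqrt (h x) - h x0 * Real.sqrt (h x0) := by
      apply intervalIntegral.integral_eq_sub_of_hasDerivAt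
      · intro t ht
        have := (hasDerivAt_mul_sqrt (h t)).comp t (hdiff t (hsub ht)).hasDerivAt
        simpa [hgdef, Function.comp_def, mul_assoc] using this
      · exact hgI.mono_set (by rw [hIcc]; exact hsub)
    have habs : |∫ t in x0..x, g t| ≤ ∫ t in (-a)..a, |g t| := by
      rcases le_total x0 x with hc | hc
      · calc |∫ t in x0..x, g t| ≤ ∫ t in x0..x, |g t| :=
              intervalIntegral.abs_integral_le_integral_abs hc
          _ ≤ ∫ t in (-a)..a, |g t| :=
              intervalIntegral.integral_mono_interval hx0.1 hc hx.2
                (ae_of_all _ fun t => abs_nonneg _) hgabsI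
      · rw [intervalIntegral.integral_symm, abs_neg]
        calc |∫ t in x..x0, g t| ≤ ∫ t in x..x0, |g t| :=
              intervalIntegral.abs_integral_le_integral_abs hc
          _ ≤ ∫ t in (-a)..a, |g t| :=
              intervalIntegral.integral_mono_interval hx.1 hc hx0.2
                (ae_of_all _ fun t => abs_nonneg _) hgabsI
    rw [hftc] at habs
    linarith [le_abs_self (h x * Real.sqrt (h x) - h x0 * Real.sqrt (h x0)), habs]
  -- Cauchy–Schwarz bound
  have hCS : (∫ t in (-a)..a, |g t|) ≤ 3/2 * Real.sqrt (M * D) := by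
    have hXle : ∀ ε : ℝ, 0 < ε →
        (∫ t in (-a)..a, |g t|) ≤ 3/4 * (ε * M + D / ε) := by
      intro ε hε
      have hint2 : IntervalIntegrable (fun t => ε * h t + (deriv h t)^2 / ε) volume (-a) a :=
        (hInt.const_mul ε).add (hL2'Int.div_const ε)
      have hmono : (∫ t in (-a)..a, |g t|)
          ≤ ∫ t in (-a)..a, 3/4 * (ε * h t + (deriv h t)^2 / ε) := by
        apply intervalIntegral.integral_mono_on haa hgabsI (hint2.const_mul (3/4))
        intro t ht
        have hs := Real.sq_sqrt (hnn t ht)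
        have hsn := Real.sqrt_nonneg (h t)
        have h1 : |g t| = 3/2 * (Real.sqrt (h t) * |deriv h t|) := by
          simp only [hgdef, abs_mul]
          rw [abs_of_nonneg hsn, abs_of_pos (by norm_num : (0:ℝ) < 3/2)]
          ring
        rw [h1]
        have key : 2 * (Real.sqrt (h t) * |deriv h t|) * ε ≤ ε^2 * h t + (deriv h t)^2 := by
          nlinarith [sq_nonneg (ε * Real.sqrt (h t) - |deriv h t|), sq_abs (deriv h t)]
        have h2 : Real.sqrt (h t) * |deriv h t| ≤ (ε * h t + (deriv h t)^2 / ε) / 2 := by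
          rw [le_div_iff₀ (by norm_num : (0:ℝ) < 2)]
          calc Real.sqrt (h t) * |deriv h t| * 2
              = 2 * (Real.sqrt (h t) * |deriv h t|) * ε / ε := by field_simp
            _ ≤ (ε^2 * h t + (deriv h t)^2) / ε := (div_le_div_iff_of_pos_right hε).mpr key
            _ = ε * h t + (deriv h t)^2 / ε := by field_simp
        linarith
      have heq : (∫ t in (-a)..a, 3/4 * (ε * h t + (deriv h t)^2 / ε))
          = 3/4 * (ε * M + D / ε) := by
        rw [intervalIntegral.integral_const_mul,
          intervalIntegral.integral_add (hInt.const_mul ε) (hL2'Int.div_const ε),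
          intervalIntegral.integral_const_mul, intervalIntegral.integral_div, hM]
      rw [heq] at hmono
      exact hmono
    rcases eq_or_lt_of_le hD0 with hD | hD
    · have hz : ∀ ε' : ℝ, 0 < ε' → (∫ t in (-a)..a, |g t|) ≤ 0 + ε' := by
        intro ε' hε'
        have := hXle (4*ε'/(3*M)) (by positivity)
        rw [← hD] at this
        calc (∫ t in (-a)..a, |g t|) ≤ 3/4 * (4*ε'/(3*M) * M + 0 / (4*ε'/(3*M))) := this
          _ = 0 + ε' := by
              have hM0 : M ≠ 0 := hMpos.ne'
              field_simp
              ring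
      have := le_of_forall_pos_le_add hz
      calc (∫ t in (-a)..a, |g t|) ≤ 0 := this
        _ ≤ 3/2 * Real.sqrt (M * D) := by positivity
    · have hXD := hXle (Real.sqrt D / Real.sqrt M) (by positivity)
      have hsM : Real.sqrt M ^ 2 = M := Real.sq_sqrt hMpos.le
      have hsD : Real.sqrt D ^ 2 = D := Real.sq_sqrt hD0
      have hM' : Real.sqrt M ≠ 0 := by positivity
      have hD' : Real.sqrt D ≠ 0 := by positivity
      have heq : 3/4 * (Real.sqrt D / Real.sqrt M * M + D / (Real.sqrt D / Real.sqrt M))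
          = 3/2 * Real.sqrt (M * D) := by
        rw [Real.sqrt_mul hMpos.le]
        field_simp
        nlinarith [hsM, hsD]
      linarith [hXD, heq.ge]
  -- sup bound on h
  set K := M/(2*a) * Real.sqrt (M/(2*a)) + 3/2 * Real.sqrt (M * D) with hKdef
  have hx0b : h x0 * Real.sqrt (h x0) ≤ M/(2*a) * Real.sqrt (M/(2*a)) :=
    mul_le_mul hx0le (Real.sqrt_le_sqrt hx0le) (Real.sqrt_nonneg _) (by positivity)
  have hhb : ∀ x ∈ Set.Icc (-a) a, h x ≤ K ^ ((2:ℝ)/3) := by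
    intro x hx
    have h1 : h x * Real.sqrt (h x) ≤ K := by
      calc h x * Real.sqrt (h x)
          ≤ h x0 * Real.sqrt (h x0) + ∫ t in (-a)..a, |g t| := hKey x hx
        _ ≤ K := add_le_add hx0b hCS
    have h2 : (h x) ^ ((3:ℝ)/2) ≤ K := by rw [← mul_sqrt_eq_rpow (hnn x hx)]; exact h1
    have h3 := Real.rpow_le_rpow (Real.rpow_nonneg (hnn x hx) _) h2
      (by norm_num : (0:ℝ) ≤ 2/3)
    rw [← Real.rpow_mul (hnn x hx)] at h3
    norm_num at h3
    exact h3
  have hKnn : 0 ≤ K := by positivity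
  -- first estimate
  have hfinal1 : (∫ x in (-a)..a, (h x)^2) ≤ K ^ ((2:ℝ)/3) * M := by
    calc (∫ x in (-a)..a, (h x)^2)
        ≤ ∫ x in (-a)..a, K ^ ((2:ℝ)/3) * h x := by
          apply intervalIntegral.integral_mono_on haa hL2Int (hInt.const_mul _)
          intro x hx
          have := hhb x hx
          have := hnn x hx
          nlinarith
      _ = K ^ ((2:ℝ)/3) * M := by rw [intervalIntegral.integral_const_mul, hM]
  -- final algebra
  have e1 : (M/(2*a) * Real.sqrt (M/(2*a))) ^ ((2:ℝ)/3) = M/(2*a) := by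
    rw [mul_sqrt_eq_rpow (by positivity), ← Real.rpow_mul (by positivity)]
    norm_num
  have e2 : ((3:ℝ)/2 * Real.sqrt (M*D)) ^ ((2:ℝ)/3)
      = ((3:ℝ)/2) ^ ((2:ℝ)/3) * (M ^ ((1:ℝ)/3) * D ^ ((1:ℝ)/3)) := by
    rw [Real.mul_rpow (by norm_num) (Real.sqrt_nonneg _), Real.sqrt_eq_rpow,
      ← Real.rpow_mul (by positivity : (0:ℝ) ≤ M*D)]
    norm_num
    rw [Real.mul_rpow hMpos.le hD0]
  have hKle : K ^ ((2:ℝ)/3)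
      ≤ M/(2*a) + ((3:ℝ)/2) ^ ((2:ℝ)/3) * (M ^ ((1:ℝ)/3) * D ^ ((1:ℝ)/3)) := by
    have := real_rpow_add_le (p := (2:ℝ)/3) (by positivity : (0:ℝ) ≤ M/(2*a) * Real.sqrt (M/(2*a)))
      (by positivity : (0:ℝ) ≤ 3/2 * Real.sqrt (M*D)) (by norm_num) (by norm_num)
    rw [e1, e2] at this
    exact this
  have hM43 : M * M ^ ((1:ℝ)/3) = M ^ ((4:ℝ)/3) := by
    nth_rewrite 1 [← Real.rpow_one M]
    rw [← Real.rpow_add hMpos]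
    norm_num
  have hc : ((3:ℝ)/2) ^ ((2:ℝ)/3) ≤ (6:ℝ) ^ ((2:ℝ)/3) :=
    Real.rpow_le_rpow (by norm_num) (by norm_num) (by norm_num)
  have hD13 : 0 ≤ D ^ ((1:ℝ)/3) := Real.rpow_nonneg hD0 _
  have hM13 : 0 ≤ M ^ ((1:ℝ)/3) := Real.rpow_nonneg hMpos.le _
  have hM43n : 0 ≤ M ^ ((4:ℝ)/3) := Real.rpow_nonneg hMpos.le _
  calc (∫ x in (-a)..a, (h x)^2) ≤ K ^ ((2:ℝ)/3) * M := hfinal1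
    _ ≤ (M/(2*a) + ((3:ℝ)/2) ^ ((2:ℝ)/3) * (M ^ ((1:ℝ)/3) * D ^ ((1:ℝ)/3))) * M :=
        mul_le_mul_of_nonneg_right hKle hMpos.le
    _ = M^2/(2*a) + ((3:ℝ)/2) ^ ((2:ℝ)/3) * (M ^ ((4:ℝ)/3) * D ^ ((1:ℝ)/3)) := by
        rw [← hM43]; ring
    _ ≤ (6:ℝ) ^ ((2:ℝ)/3) * M ^ ((4:ℝ)/3) * D ^ ((1:ℝ)/3) + M^2/(2*a) := by
        have : ((3:ℝ)/2) ^ ((2:ℝ)/3) * (M ^ ((4:ℝ)/3) * D ^ ((1:ℝ)/3))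
            ≤ (6:ℝ) ^ ((2:ℝ)/3) * (M ^ ((4:ℝ)/3) * D ^ ((1:ℝ)/3)) :=
          mul_le_mul_of_nonneg_right hc (by positivity)
        linarith [this]
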